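/- Define F : ℝ⁶ → ℝ by F(r12, r13, r14, r23, r24, r34) = r12² r34² − (1/4)(r13² + r24² − r14² − r23²)², and let H : ℝ⁶ → ℝ be the Cayley–Menger determinant of r12, r13, r14, r23, r24, r34. Let q1, q2, q3, q4 be four points in the Euclidean plane ℝ² with q2 − q1 = t • (q3 − q4) for some t > 0 and q1, q2, q4 not collinear, let r ∈ ℝ⁶ be the vector of their mutual distances (in the order r12, r13, r14, r23, r24, r34), and let h be the distance between the parallel lines through q1, q2 and through q3, q4 (i.e., the distance from q3 to the affine line through q1 and q2). Then the (Fréchet) derivatives satisfy ∇H(r) = 8 h² ∇F(r). -/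

import Mathlib

set_option maxHeartbeats 1000000

noncomputable def cayleyMengerH : (Fin 6 → ℝ) → ℝ := fun r =>
  Matrix.det
    !![0, 1, 1, 1, 1;
       1, 0, (r 0) ^ 2, (r 1) ^ 2, (r 2) ^ 2;
       1, (r 0) ^ 2, 0, (r 3) ^ 2, (r 4) ^ 2;
       1, (r 1) ^ 2, (r 3) ^ 2, 0, (r 5) ^ 2;
       1, (r 2) ^ 2, (r 4) ^ 2, (r 5) ^ 2, 0]

noncomputable def trapF : (Fin 6 → ℝ) → ℝ := fun r =>
  (r 0) ^ 2 * (r 5) ^ 2 -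
    (1 / 4) * ((r 1) ^ 2 + (r 4) ^ 2 - (r 2) ^ 2 - (r 3) ^ 2) ^ 2

lemma cayleyMengerH_poly (r : Fin 6 → ℝ) : cayleyMengerH r = ((-2:ℝ)*r 3 ^ 2*r 4 ^ 2*r 5 ^ 2 + (2:ℝ)*r 2 ^ 2*r 3 ^ 2*r 5 ^ 2 + (2:ℝ)*r 2 ^ 2*r 3 ^ 2*r 4 ^ 2 + (-2:ℝ)*r 2 ^ 2*r 3 ^ 2*r 3 ^ 2 + (-2:ℝ)*r 2 ^ 2*r 2 ^ 2*r 3 ^ 2 + (2:ℝ)*r 1 ^ 2*r 4 ^ 2*r 5 ^ 2 + (-2:ℝ)*r 1 ^ 2*r 4 ^ 2*r 4 ^ 2 + (2:ℝ)*r 1 ^ 2*r 3 ^ 2*r 4 ^ 2 + (-2:ℝ)*r 1 ^ 2*r 2 ^ 2*r 5 ^ 2 + (2:ℝ)*r 1 ^ 2*r 2 ^ 2*r 4 ^ 2 + (2:ℝ)*r 1 ^ 2*r 2 ^ 2*r 3 ^ 2 + (-2:ℝ)*r 1 ^ 2*r 1 ^ 2*r 4 ^ 2 + (-2:ℝ)*r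 0 ^ 2*r 5 ^ 2*r 5 ^ 2 + (2:ℝ)*r 0 ^ 2*r 4 ^ 2*r 5 ^ 2 + (2:ℝ)*r 0 ^ 2*r 3 ^ 2*r 5 ^ 2 + (2:ℝ)*r 0 ^ 2*r 2 ^ 2*r 5 ^ 2 + (-2:ℝ)*r 0 ^ 2*r 2 ^ 2*r 4 ^ 2 + (2:ℝ)*r 0 ^ 2*r 2 ^ 2*r 3 ^ 2 + (2:ℝ)*r 0 ^ 2*r 1 ^ 2*r 5 ^ 2 + (2:ℝ)*r 0 ^ 2*r 1 ^ 2*r 4 ^ 2 + (-2:ℝ)*r 0 ^ 2*r 1 ^ 2*r 3 ^ 2 + (-2:ℝ)*r 0 ^ 2*r 0 ^ 2*r 5 ^ 2) := by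
  simp [cayleyMengerH, Matrix.det_succ_row_zero, Fin.sum_univ_succ, Matrix.submatrix_apply]
  simp [Matrix.cons_val, Fin.succAbove, Fin.lt_def,
    show Fin.castSucc (2 : Fin 3) = (2 : Fin 4) from rfl,
    show Fin.castSucc (2 : Fin 4) = (2 : Fin 5) from rfl,
    show Fin.succ (2 : Fin 3) = (3 : Fin 4) from rfl,
    show Fin.succ (2 : Fin 4) = (3 : Fin 5) from rfl,
    show Fin.castSucc (3 : Fin 4) = (3 : Fin 5) from rfl,
    show Fin.succ (3 : Fin 4) = (4 : Fin 5) from rfl,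
    show ((3 : Fin 4) : ℕ) = 3 from rfl,
    show ((3 : Fin 5) : ℕ) = 3 from rfl,
    show ((2 : Fin 4) : ℕ) = 2 from rfl,
    show ((2 : Fin 5) : ℕ) = 2 from rfl,
    show ((4 : Fin 5) : ℕ) = 4 from rfl]
  ring

lemma fderivSingleQuartic {f : (Fin 6 → ℝ) → ℝ} {r : Fin 6 → ℝ} (hf : DifferentiableAt ℝ f r)
    (i : Fin 6) (A B C : ℝ)
    (hq : ∀ τ : ℝ, f (r + τ • (Pi.single i 1 : Fin 6 → ℝ)) = A*(r i + τ)^4 + B*(r i + τ)^2 + C) :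
    fderiv ℝ f r (Pi.single i 1) = 4*A*(r i)^3 + 2*B*(r i) := by
  have h1 : HasDerivAt (fun τ : ℝ => r + τ • (Pi.single i 1 : Fin 6 → ℝ)) (Pi.single i 1) 0 := by
    simpa using ((hasDerivAt_id (0:ℝ)).smul_const (Pi.single i 1 : Fin 6 → ℝ)).const_add r
  have h0 : HasFDerivAt f (fderiv ℝ f r) (r + (0:ℝ) • (Pi.single i 1 : Fin 6 → ℝ)) := by
    simpa using hf.hasFDerivAt
  have h2 : HasDerivAt (fun τ : ℝ => f (r + τ • (Pi.single i 1 : Fin 6 → ℝ)))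
      (fderiv ℝ f r (Pi.single i 1)) 0 := h0.comp_hasDerivAt 0 h1
  have hx : HasDerivAt (fun τ : ℝ => r i + τ) 1 0 := by
    simpa using (hasDerivAt_id (0:ℝ)).const_add (r i)
  have h3 : HasDerivAt (fun τ : ℝ => A*(r i + τ)^4 + B*(r i + τ)^2 + C)
      (4*A*(r i)^3 + 2*B*(r i)) 0 := by
    have h4 := (((hx.pow 4).const_mul A).add ((hx.pow 2).const_mul B)).add_const C
    exact h4.congr_deriv (by norm_num; ring)
  rw [show (fun τ : ℝ => f (r + τ • (Pi.single i 1 : Fin 6 → ℝ)))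
      = fun τ : ℝ => A*(r i + τ)^4 + B*(r i + τ)^2 + C from funext hq] at h2
  exact h2.unique h3

lemma infDist_line_sq {V : Type*} [NormedAddCommGroup V] [InnerProductSpace ℝ V]
    (q1 q2 q3 : V) (hne : q1 ≠ q2) :
    (Metric.infDist q3 (affineSpan ℝ ({q1, q2} : Set V) : Set V))^2 * ‖q2 - q1‖^2
      = ‖q3 - q1‖^2 * ‖q2 - q1‖^2 - (inner ℝ (q3 - q1) (q2 - q1) : ℝ)^2 := by
  set u := q2 - q1 with hu_def
  set v := q3 - q1 with hv_def
  have hu : ‖u‖ ≠ 0 := by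
    simp only [hu_def, norm_ne_zero_iff, sub_ne_zero]
    exact fun hh => hne hh.symm
  set c : ℝ := (inner ℝ v u : ℝ) / ‖u‖^2 with hc_def
  have hinner : (inner ℝ (v - c • u) u : ℝ) = 0 := by
    rw [inner_sub_left, real_inner_smul_left, hc_def, real_inner_self_eq_norm_sq]
    field_simp
    ring
  have hdist : ∀ y ∈ (affineSpan ℝ ({q1, q2} : Set V) : Set V), ‖v - c • u‖ ≤ dist q3 y := by
    intro y hy
    obtain ⟨a, ha⟩ : ∃ a : ℝ, a • (q2 -ᵥ q1) = y -ᵥ q1 := by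
      rw [← vadd_left_mem_affineSpan_pair]
      simpa using hy
    have hy' : y = a • u + q1 := by
      simp only [vsub_eq_sub] at ha
      rw [hu_def, ha]; abel
    have hq3y : q3 - y = v - a • u := by rw [hy', hv_def]; abel
    have expand : ‖v - a • u‖^2 = ‖v - c • u‖^2 + (c - a)^2 * ‖u‖^2 := by
      have hsplit : v - a • u = (v - c • u) + (c - a) • u := by
        rw [sub_smul]; abel
      rw [hsplit, norm_add_sq_real, inner_smul_right, hinner, norm_smul]
      simp [mul_pow, sq_abs]
    have h1 : ‖v - c • u‖^2 ≤ ‖v - a • u‖^2 := by nlinarith [sq_nonneg ((c-a)*‖u‖)]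
    rw [dist_eq_norm, hq3y]
    have := Real.sqrt_le_sqrt h1
    rwa [Real.sqrt_sq (norm_nonneg _), Real.sqrt_sq (norm_nonneg _)] at this
  have hmem : c • u + q1 ∈ (affineSpan ℝ ({q1, q2} : Set V) : Set V) := by
    have := smul_vsub_vadd_mem_affineSpan_pair c q1 q2
    simpa [vsub_eq_sub, vadd_eq_add, hu_def] using this
  have hle : Metric.infDist q3 (affineSpan ℝ ({q1, q2} : Set V) : Set V) ≤ ‖v - c • u‖ := by
    have := Metric.infDist_le_dist_of_mem (x := q3) hmem
    rwa [dist_eq_norm, show q3 - (c • u + q1) = v - c • u by rw [hv_def]; abel] at this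
  have hge : ‖v - c • u‖ ≤ Metric.infDist q3 (affineSpan ℝ ({q1, q2} : Set V) : Set V) := by
    haveI : Nonempty (affineSpan ℝ ({q1, q2} : Set V) : Set V) :=
      ⟨⟨q1, left_mem_affineSpan_pair ℝ q1 q2⟩⟩
    rw [Metric.infDist_eq_iInf]
    exact le_ciInf (fun y => hdist y y.2)
  rw [le_antisymm hle hge]
  rw [norm_sub_sq_real, real_inner_smul_right, norm_smul]
  simp only [mul_pow, sq_abs, real_inner_self_eq_norm_sq]
  rw [hc_def]
  rw [Real.norm_eq_abs, sq_abs]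
  field_simp
  ring

theorem gradients_parallel (q1 q2 q3 q4 : EuclideanSpace ℝ (Fin 2)) (t : ℝ)
    (ht : 0 < t) (hpar : q2 - q1 = t • (q3 - q4))
    (hncol : ¬ Collinear ℝ ({q1, q2, q4} : Set (EuclideanSpace ℝ (Fin 2))))
    (r : Fin 6 → ℝ)
    (hr : r = ![dist q1 q2, dist q1 q3, dist q1 q4, dist q2 q3, dist q2 q4, dist q3 q4])
    (h : ℝ)
    (hh : h = Metric.infDist q3 (affineSpan ℝ ({q1, q2} : Set (EuclideanSpace ℝ (Fin 2))))) :
    fderiv ℝ cayleyMengerH r = (8 * h ^ 2) • fderiv ℝ trapF r := by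
  have htne : t ≠ 0 := ne_of_gt ht
  have ht2 : (t:ℝ)^2 ≠ 0 := pow_ne_zero 2 htne
  have h12 : q1 ≠ q2 := by
    rintro rfl
    exact hncol (by rw [Set.insert_idem]; exact collinear_pair ℝ q1 q4)
  have h34 : q3 ≠ q4 := by
    intro heq
    apply h12
    have : q2 - q1 = 0 := by rw [hpar, heq, sub_self, smul_zero]
    have := sub_eq_zero.mp this
    exact this.symm
  set v3 := q3 - q1 with hv3_def
  set v4 := q4 - q1 with hv4_def
  set pp := (inner ℝ v3 v3 : ℝ) with hpp
  set qq := (inner ℝ v3 v4 : ℝ) with hqq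
  set mm := (inner ℝ v4 v4 : ℝ) with hmm
  have hcomm : (inner ℝ v4 v3 : ℝ) = qq := by rw [hqq, real_inner_comm]
  have hu2 : q2 - q1 = t • (v3 - v4) := by
    rw [hpar, hv3_def, hv4_def]
    congr 1
    abel
  have w12 : q1 - q2 = -(t • (v3 - v4)) := by
    rw [← hu2]; abel
  have w13 : q1 - q3 = -v3 := by rw [hv3_def]; abel
  have w14 : q1 - q4 = -v4 := by rw [hv4_def]; abel
  have w23 : q2 - q3 = t • (v3 - v4) - v3 := by
    rw [← hu2, hv3_def]; abel
  have w24 : q2 - q4 = t • (v3 - v4) - v4 := by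
    rw [← hu2, hv4_def]; abel
  have w34 : q3 - q4 = v3 - v4 := by rw [hv3_def, hv4_def]; abel
  have sqd : ∀ x y : EuclideanSpace ℝ (Fin 2), dist x y ^ 2 = (inner ℝ (x - y) (x - y) : ℝ) := by
    intro x y
    rw [dist_eq_norm]
    exact (real_inner_self_eq_norm_sq _).symm
  have hd0' : (0:ℝ) < pp - 2*qq + mm := by
    have hpos : (0:ℝ) < ‖q3 - q4‖^2 :=
      pow_pos (norm_pos_iff.mpr (sub_ne_zero.mpr h34)) 2
    have hexp : ‖q3 - q4‖^2 = pp - 2*qq + mm := by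
      rw [← real_inner_self_eq_norm_sq, w34]
      simp only [inner_sub_left, inner_sub_right,
        hcomm, ← hpp, ← hqq, ← hmm]
      ring
    rwa [hexp] at hpos
  have hd0 : pp - 2*qq + mm ≠ 0 := ne_of_gt hd0'
  have hr0 : r 0 = dist q1 q2 := by rw [hr]; rfl
  have e0 : r 0 ^ 2 = t^2*pp - 2*t^2*qq + t^2*mm := by
    rw [hr0, sqd, w12]
    simp only [inner_neg_neg, inner_neg_left, inner_neg_right, inner_sub_left, inner_sub_right,
      real_inner_smul_left, real_inner_smul_right,
      hcomm, ← hpp, ← hqq, ← hmm]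
    try ring
  have hr1 : r 1 = dist q1 q3 := by rw [hr]; rfl
  have e1 : r 1 ^ 2 = pp := by
    rw [hr1, sqd, w13]
    simp only [inner_neg_neg, inner_neg_left, inner_neg_right, inner_sub_left, inner_sub_right,
      real_inner_smul_left, real_inner_smul_right,
      hcomm, ← hpp, ← hqq, ← hmm]
    try ring
  have hr2 : r 2 = dist q1 q4 := by rw [hr]; rfl
  have e2 : r 2 ^ 2 = mm := by
    rw [hr2, sqd, w14]
    simp only [inner_neg_neg, inner_neg_left, inner_neg_right, inner_sub_left, inner_sub_right,
      real_inner_smul_left, real_inner_smul_right,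
      hcomm, ← hpp, ← hqq, ← hmm]
    try ring
  have hr3 : r 3 = dist q2 q3 := by rw [hr]; rfl
  have e3 : r 3 ^ 2 = (1-t)^2*pp + 2*t*(1-t)*qq + t^2*mm := by
    rw [hr3, sqd, w23]
    simp only [inner_neg_neg, inner_neg_left, inner_neg_right, inner_sub_left, inner_sub_right,
      real_inner_smul_left, real_inner_smul_right,
      hcomm, ← hpp, ← hqq, ← hmm]
    try ring
  have hr4 : r 4 = dist q2 q4 := by rw [hr]; rfl
  have e4 : r 4 ^ 2 = t^2*pp - 2*t*(1+t)*qq + (1+t)^2*mm := by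
    rw [hr4, sqd, w24]
    simp only [inner_neg_neg, inner_neg_left, inner_neg_right, inner_sub_left, inner_sub_right,
      real_inner_smul_left, real_inner_smul_right,
      hcomm, ← hpp, ← hqq, ← hmm]
    try ring
  have hr5 : r 5 = dist q3 q4 := by rw [hr]; rfl
  have e5 : r 5 ^ 2 = pp - 2*qq + mm := by
    rw [hr5, sqd, w34]
    simp only [inner_neg_neg, inner_neg_left, inner_neg_right, inner_sub_left, inner_sub_right,
      real_inner_smul_left, real_inner_smul_right,
      hcomm, ← hpp, ← hqq, ← hmm]
    try ring
  have hinf := infDist_line_sq q1 q2 q3 h12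
  rw [← hh] at hinf
  have n12 : ‖q2 - q1‖^2 = t^2*(pp - 2*qq + mm) := by
    rw [← real_inner_self_eq_norm_sq, hu2]
    simp only [inner_sub_left, inner_sub_right, real_inner_smul_left, real_inner_smul_right,
      hcomm, ← hpp, ← hqq, ← hmm]
    try ring
  have n13 : ‖q3 - q1‖^2 = pp := by
    rw [← hv3_def, ← real_inner_self_eq_norm_sq, ← hpp]
  have i32 : (inner ℝ (q3 - q1) (q2 - q1) : ℝ) = t*(pp - qq) := by
    rw [← hv3_def, hu2]
    simp only [inner_sub_left, inner_sub_right, real_inner_smul_left, real_inner_smul_right,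
      hcomm, ← hpp, ← hqq, ← hmm]
    try ring
  rw [n12, n13, i32] at hinf
  have hE : h^2 * (pp - 2*qq + mm) = pp*mm - qq^2 := by
    apply mul_left_cancel₀ ht2
    linear_combination hinf
  have Hfun : cayleyMengerH = fun r : Fin 6 → ℝ => ((-2:ℝ)*r 3 ^ 2*r 4 ^ 2*r 5 ^ 2 + (2:ℝ)*r 2 ^ 2*r 3 ^ 2*r 5 ^ 2 + (2:ℝ)*r 2 ^ 2*r 3 ^ 2*r 4 ^ 2 + (-2:ℝ)*r 2 ^ 2*r 3 ^ 2*r 3 ^ 2 + (-2:ℝ)*r 2 ^ 2*r 2 ^ 2*r 3 ^ 2 + (2:ℝ)*r 1 ^ 2*r 4 ^ 2*r 5 ^ 2 + (-2:ℝ)*r 1 ^ 2*r 4 ^ 2*r 4 ^ 2 + (2:ℝ)*r 1 ^ 2*r 3 ^ 2*r 4 ^ 2 + (-2:ℝ)*r 1 ^ 2*r 2 ^ 2*r 5 ^ 2 + (2:ℝ)*r 1 ^ 2*r 2 ^ 2*r 4 ^ 2 + (2:ℝ)*r 1 ^ 2*r 2 ^ 2*r 3 ^ 2 + (-2:ℝ)*r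 1 ^ 2*r 1 ^ 2*r 4 ^ 2 + (-2:ℝ)*r 0 ^ 2*r 5 ^ 2*r 5 ^ 2 + (2:ℝ)*r 0 ^ 2*r 4 ^ 2*r 5 ^ 2 + (2:ℝ)*r 0 ^ 2*r 3 ^ 2*r 5 ^ 2 + (2:ℝ)*r 0 ^ 2*r 2 ^ 2*r 5 ^ 2 + (-2:ℝ)*r 0 ^ 2*r 2 ^ 2*r 4 ^ 2 + (2:ℝ)*r 0 ^ 2*r 2 ^ 2*r 3 ^ 2 + (2:ℝ)*r 0 ^ 2*r 1 ^ 2*r 5 ^ 2 + (2:ℝ)*r 0 ^ 2*r 1 ^ 2*r 4 ^ 2 + (-2:ℝ)*r 0 ^ 2*r 1 ^ 2*r 3 ^ 2 + (-2:ℝ)*r 0 ^ 2*r 0 ^ 2*r 5 ^ 2) := funext cayleyMengerH_poly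
  have diffH : DifferentiableAt ℝ cayleyMengerH r := by
    rw [Hfun]; fun_prop
  have diffF : DifferentiableAt ℝ trapF r := by
    unfold trapF; fun_prop
  have K0 : fderiv ℝ cayleyMengerH r (Pi.single (0:Fin 6) 1)
      = 8*h^2 * (fderiv ℝ trapF r (Pi.single (0:Fin 6) 1)) := by
    rw [fderivSingleQuartic diffH 0 ((-2:ℝ)*r 5 ^ 2) ((-2:ℝ)*r 5 ^ 2*r 5 ^ 2 + (2:ℝ)*r 4 ^ 2*r 5 ^ 2 + (2:ℝ)*r 3 ^ 2*r 5 ^ 2 + (2:ℝ)*r 2 ^ 2*r 5 ^ 2 + (-2:ℝ)*r 2 ^ 2*r 4 ^ 2 + (2:ℝ)*r 2 ^ 2*r 3 ^ 2 + (2:ℝ)*r 1 ^ 2*r 5 ^ 2 + (2:ℝ)*r 1 ^ 2*r 4 ^ 2 + (-2:ℝ)*r 1 ^ 2*r 3 ^ 2) ((-2:ℝ)*r 3 ^ 2*r 4 ^ 2*r 5 ^ 2 + (2:ℝ)*r 2 ^ 2*r 3 ^ 2*r 5 ^ 2 + (2:ℝ)*r 2 ^ 2*r 3 ^ 2*r 4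 ^ 2 + (-2:ℝ)*r 2 ^ 2*r 3 ^ 2*r 3 ^ 2 + (-2:ℝ)*r 2 ^ 2*r 2 ^ 2*r 3 ^ 2 + (2:ℝ)*r 1 ^ 2*r 4 ^ 2*r 5 ^ 2 + (-2:ℝ)*r 1 ^ 2*r 4 ^ 2*r 4 ^ 2 + (2:ℝ)*r 1 ^ 2*r 3 ^ 2*r 4 ^ 2 + (-2:ℝ)*r 1 ^ 2*r 2 ^ 2*r 5 ^ 2 + (2:ℝ)*r 1 ^ 2*r 2 ^ 2*r 4 ^ 2 + (2:ℝ)*r 1 ^ 2*r 2 ^ 2*r 3 ^ 2 + (-2:ℝ)*r 1 ^ 2*r 1 ^ 2*r 4 ^ 2)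
        (by intro τ; rw [cayleyMengerH_poly]; simp [Pi.single_apply]; ring),
      fderivSingleQuartic diffF 0 (0:ℝ) ((1:ℝ)*r 5 ^ 2) (((-1:ℝ)/4)*r 4 ^ 2*r 4 ^ 2 + ((1:ℝ)/2)*r 3 ^ 2*r 4 ^ 2 + ((-1:ℝ)/4)*r 3 ^ 2*r 3 ^ 2 + ((1:ℝ)/2)*r 2 ^ 2*r 4 ^ 2 + ((-1:ℝ)/2)*r 2 ^ 2*r 3 ^ 2 + ((-1:ℝ)/4)*r 2 ^ 2*r 2 ^ 2 + ((-1:ℝ)/2)*r 1 ^ 2*r 4 ^ 2 + ((1:ℝ)/2)*r 1 ^ 2*r 3 ^ 2 + ((1:ℝ)/2)*r 1 ^ 2*r 2 ^ 2 + ((-1:ℝ)/4)*r 1 ^ 2*r 1 ^ 2)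
        (by intro τ; simp only [trapF]; simp [Pi.single_apply]; ring)]
    have X : 4*((-2:ℝ)*r 5 ^ 2)*(r 0)^2 + 2*((-2:ℝ)*r 5 ^ 2*r 5 ^ 2 + (2:ℝ)*r 4 ^ 2*r 5 ^ 2 + (2:ℝ)*r 3 ^ 2*r 5 ^ 2 + (2:ℝ)*r 2 ^ 2*r 5 ^ 2 + (-2:ℝ)*r 2 ^ 2*r 4 ^ 2 + (2:ℝ)*r 2 ^ 2*r 3 ^ 2 + (2:ℝ)*r 1 ^ 2*r 5 ^ 2 + (2:ℝ)*r 1 ^ 2*r 4 ^ 2 + (-2:ℝ)*r 1 ^ 2*r 3 ^ 2)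
        = 8*h^2*(4*(0:ℝ)*(r 0)^2 + 2*((1:ℝ)*r 5 ^ 2)) := by
      rw [e0, e1, e2, e3, e4, e5]
      rw [show h^2 = (pp*mm - qq^2)/(pp - 2*qq + mm) from by rw [eq_div_iff hd0]; exact hE]
      field_simp
      ring
    linear_combination (r 0) * X
  have K1 : fderiv ℝ cayleyMengerH r (Pi.single (1:Fin 6) 1)
      = 8*h^2 * (fderiv ℝ trapF r (Pi.single (1:Fin 6) 1)) := by
    rw [fderivSingleQuartic diffH 1 ((-2:ℝ)*r 4 ^ 2) ((2:ℝ)*r 4 ^ 2*r 5 ^ 2 + (-2:ℝ)*r 4 ^ 2*r 4 ^ 2 + (2:ℝ)*r 3 ^ 2*r 4 ^ 2 + (-2:ℝ)*r 2 ^ 2*r 5 ^ 2 + (2:ℝ)*r 2 ^ 2*r 4 ^ 2 + (2:ℝ)*r 2 ^ 2*r 3 ^ 2 + (2:ℝ)*r 0 ^ 2*r 5 ^ 2 + (2:ℝ)*r 0 ^ 2*r 4 ^ 2 + (-2:ℝ)*r 0 ^ 2*r 3 ^ 2) ((-2:ℝ)*r 3 ^ 2*r 4 ^ 2*r 5 ^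 2 + (2:ℝ)*r 2 ^ 2*r 3 ^ 2*r 5 ^ 2 + (2:ℝ)*r 2 ^ 2*r 3 ^ 2*r 4 ^ 2 + (-2:ℝ)*r 2 ^ 2*r 3 ^ 2*r 3 ^ 2 + (-2:ℝ)*r 2 ^ 2*r 2 ^ 2*r 3 ^ 2 + (-2:ℝ)*r 0 ^ 2*r 5 ^ 2*r 5 ^ 2 + (2:ℝ)*r 0 ^ 2*r 4 ^ 2*r 5 ^ 2 + (2:ℝ)*r 0 ^ 2*r 3 ^ 2*r 5 ^ 2 + (2:ℝ)*r 0 ^ 2*r 2 ^ 2*r 5 ^ 2 + (-2:ℝ)*r 0 ^ 2*r 2 ^ 2*r 4 ^ 2 + (2:ℝ)*r 0 ^ 2*r 2 ^ 2*r 3 ^ 2 + (-2:ℝ)*r 0 ^ 2*r 0 ^ 2*r 5 ^ 2)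
        (by intro τ; rw [cayleyMengerH_poly]; simp [Pi.single_apply]; ring),
      fderivSingleQuartic diffF 1 (((-1:ℝ)/4)) (((-1:ℝ)/2)*r 4 ^ 2 + ((1:ℝ)/2)*r 3 ^ 2 + ((1:ℝ)/2)*r 2 ^ 2) (((-1:ℝ)/4)*r 4 ^ 2*r 4 ^ 2 + ((1:ℝ)/2)*r 3 ^ 2*r 4 ^ 2 + ((-1:ℝ)/4)*r 3 ^ 2*r 3 ^ 2 + ((1:ℝ)/2)*r 2 ^ 2*r 4 ^ 2 + ((-1:ℝ)/2)*r 2 ^ 2*r 3 ^ 2 + ((-1:ℝ)/4)*r 2 ^ 2*r 2 ^ 2 + (1:ℝ)*r 0 ^ 2*r 5 ^ 2)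
        (by intro τ; simp only [trapF]; simp [Pi.single_apply]; ring)]
    have X : 4*((-2:ℝ)*r 4 ^ 2)*(r 1)^2 + 2*((2:ℝ)*r 4 ^ 2*r 5 ^ 2 + (-2:ℝ)*r 4 ^ 2*r 4 ^ 2 + (2:ℝ)*r 3 ^ 2*r 4 ^ 2 + (-2:ℝ)*r 2 ^ 2*r 5 ^ 2 + (2:ℝ)*r 2 ^ 2*r 4 ^ 2 + (2:ℝ)*r 2 ^ 2*r 3 ^ 2 + (2:ℝ)*r 0 ^ 2*r 5 ^ 2 + (2:ℝ)*r 0 ^ 2*r 4 ^ 2 + (-2:ℝ)*r 0 ^ 2*r 3 ^ 2)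
        = 8*h^2*(4*(((-1:ℝ)/4))*(r 1)^2 + 2*(((-1:ℝ)/2)*r 4 ^ 2 + ((1:ℝ)/2)*r 3 ^ 2 + ((1:ℝ)/2)*r 2 ^ 2)) := by
      rw [e0, e1, e2, e3, e4, e5]
      rw [show h^2 = (pp*mm - qq^2)/(pp - 2*qq + mm) from by rw [eq_div_iff hd0]; exact hE]
      field_simp
      ring
    linear_combination (r 1) * X
  have K2 : fderiv ℝ cayleyMengerH r (Pi.single (2:Fin 6) 1)
      = 8*h^2 * (fderiv ℝ trapF r (Pi.single (2:Fin 6) 1)) := by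
    rw [fderivSingleQuartic diffH 2 ((-2:ℝ)*r 3 ^ 2) ((2:ℝ)*r 3 ^ 2*r 5 ^ 2 + (2:ℝ)*r 3 ^ 2*r 4 ^ 2 + (-2:ℝ)*r 3 ^ 2*r 3 ^ 2 + (-2:ℝ)*r 1 ^ 2*r 5 ^ 2 + (2:ℝ)*r 1 ^ 2*r 4 ^ 2 + (2:ℝ)*r 1 ^ 2*r 3 ^ 2 + (2:ℝ)*r 0 ^ 2*r 5 ^ 2 + (-2:ℝ)*r 0 ^ 2*r 4 ^ 2 + (2:ℝ)*r 0 ^ 2*r 3 ^ 2) ((-2:ℝ)*r 3 ^ 2*r 4 ^ 2*r 5 ^ 2 + (2:ℝ)*r 1 ^ 2*r 4 ^ 2*r 5 ^ 2 + (-2:ℝ)*r 1 ^ 2*r 4 ^ 2*r 4 ^ 2 + (2:ℝ)*r 1 ^ 2*r 3 ^ 2*r 4 ^ 2 + (-2:ℝ)*r 1 ^ 2*r 1 ^ 2*r 4 ^ 2 + (-2:ℝ)*r 0 ^ 2*r 5 ^ 2*r 5 ^ 2 + (2:ℝ)*r 0 ^ 2*r 4 ^ 2*r 5 ^ 2 +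 (2:ℝ)*r 0 ^ 2*r 3 ^ 2*r 5 ^ 2 + (2:ℝ)*r 0 ^ 2*r 1 ^ 2*r 5 ^ 2 + (2:ℝ)*r 0 ^ 2*r 1 ^ 2*r 4 ^ 2 + (-2:ℝ)*r 0 ^ 2*r 1 ^ 2*r 3 ^ 2 + (-2:ℝ)*r 0 ^ 2*r 0 ^ 2*r 5 ^ 2)
        (by intro τ; rw [cayleyMengerH_poly]; simp [Pi.single_apply]; ring),
      fderivSingleQuartic diffF 2 (((-1:ℝ)/4)) (((1:ℝ)/2)*r 4 ^ 2 + ((-1:ℝ)/2)*r 3 ^ 2 + ((1:ℝ)/2)*r 1 ^ 2) (((-1:ℝ)/4)*r 4 ^ 2*r 4 ^ 2 + ((1:ℝ)/2)*r 3 ^ 2*r 4 ^ 2 + ((-1:ℝ)/4)*r 3 ^ 2*r 3 ^ 2 + ((-1:ℝ)/2)*r 1 ^ 2*r 4 ^ 2 + ((1:ℝ)/2)*r 1 ^ 2*r 3 ^ 2 + ((-1:ℝ)/4)*r 1 ^ 2*r 1 ^ 2 + (1:ℝ)*r 0 ^ 2*r 5 ^ 2)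
        (by intro τ; simp only [trapF]; simp [Pi.single_apply]; ring)]
    have X : 4*((-2:ℝ)*r 3 ^ 2)*(r 2)^2 + 2*((2:ℝ)*r 3 ^ 2*r 5 ^ 2 + (2:ℝ)*r 3 ^ 2*r 4 ^ 2 + (-2:ℝ)*r 3 ^ 2*r 3 ^ 2 + (-2:ℝ)*r 1 ^ 2*r 5 ^ 2 + (2:ℝ)*r 1 ^ 2*r 4 ^ 2 + (2:ℝ)*r 1 ^ 2*r 3 ^ 2 + (2:ℝ)*r 0 ^ 2*r 5 ^ 2 + (-2:ℝ)*r 0 ^ 2*r 4 ^ 2 + (2:ℝ)*r 0 ^ 2*r 3 ^ 2)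
        = 8*h^2*(4*(((-1:ℝ)/4))*(r 2)^2 + 2*(((1:ℝ)/2)*r 4 ^ 2 + ((-1:ℝ)/2)*r 3 ^ 2 + ((1:ℝ)/2)*r 1 ^ 2)) := by
      rw [e0, e1, e2, e3, e4, e5]
      rw [show h^2 = (pp*mm - qq^2)/(pp - 2*qq + mm) from by rw [eq_div_iff hd0]; exact hE]
      field_simp
      ring
    linear_combination (r 2) * X
  have K3 : fderiv ℝ cayleyMengerH r (Pi.single (3:Fin 6) 1)
      = 8*h^2 * (fderiv ℝ trapF r (Pi.single (3:Fin 6) 1)) := by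
    rw [fderivSingleQuartic diffH 3 ((-2:ℝ)*r 2 ^ 2) ((-2:ℝ)*r 4 ^ 2*r 5 ^ 2 + (2:ℝ)*r 2 ^ 2*r 5 ^ 2 + (2:ℝ)*r 2 ^ 2*r 4 ^ 2 + (-2:ℝ)*r 2 ^ 2*r 2 ^ 2 + (2:ℝ)*r 1 ^ 2*r 4 ^ 2 + (2:ℝ)*r 1 ^ 2*r 2 ^ 2 + (2:ℝ)*r 0 ^ 2*r 5 ^ 2 + (2:ℝ)*r 0 ^ 2*r 2 ^ 2 + (-2:ℝ)*r 0 ^ 2*r 1 ^ 2) ((2:ℝ)*r 1 ^ 2*r 4 ^ 2*r 5 ^ 2 + (-2:ℝ)*r 1 ^ 2*r 4 ^ 2*r 4 ^ 2 + (-2:ℝ)*r 1 ^ 2*r 2 ^ 2*r 5 ^ 2 + (2:ℝ)*r 1 ^ 2*r 2 ^ 2*r 4 ^ 2 + (-2:ℝ)*r 1 ^ 2*r 1 ^ 2*r 4 ^ 2 + (-2:ℝ)*r 0 ^ 2*r 5 ^ 2*r 5 ^ 2 + (2:ℝ)*r 0 ^ 2*r 4 ^ 2*r 5 ^ 2 +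 (2:ℝ)*r 0 ^ 2*r 2 ^ 2*r 5 ^ 2 + (-2:ℝ)*r 0 ^ 2*r 2 ^ 2*r 4 ^ 2 + (2:ℝ)*r 0 ^ 2*r 1 ^ 2*r 5 ^ 2 + (2:ℝ)*r 0 ^ 2*r 1 ^ 2*r 4 ^ 2 + (-2:ℝ)*r 0 ^ 2*r 0 ^ 2*r 5 ^ 2)
        (by intro τ; rw [cayleyMengerH_poly]; simp [Pi.single_apply]; ring),
      fderivSingleQuartic diffF 3 (((-1:ℝ)/4)) (((1:ℝ)/2)*r 4 ^ 2 + ((-1:ℝ)/2)*r 2 ^ 2 + ((1:ℝ)/2)*r 1 ^ 2) (((-1:ℝ)/4)*r 4 ^ 2*r 4 ^ 2 + ((1:ℝ)/2)*r 2 ^ 2*r 4 ^ 2 + ((-1:ℝ)/4)*r 2 ^ 2*r 2 ^ 2 + ((-1:ℝ)/2)*r 1 ^ 2*r 4 ^ 2 + ((1:ℝ)/2)*r 1 ^ 2*r 2 ^ 2 + ((-1:ℝ)/4)*r 1 ^ 2*r 1 ^ 2 + (1:ℝ)*r 0 ^ 2*r 5 ^ 2)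
        (by intro τ; simp only [trapF]; simp [Pi.single_apply]; ring)]
    have X : 4*((-2:ℝ)*r 2 ^ 2)*(r 3)^2 + 2*((-2:ℝ)*r 4 ^ 2*r 5 ^ 2 + (2:ℝ)*r 2 ^ 2*r 5 ^ 2 + (2:ℝ)*r 2 ^ 2*r 4 ^ 2 + (-2:ℝ)*r 2 ^ 2*r 2 ^ 2 + (2:ℝ)*r 1 ^ 2*r 4 ^ 2 + (2:ℝ)*r 1 ^ 2*r 2 ^ 2 + (2:ℝ)*r 0 ^ 2*r 5 ^ 2 + (2:ℝ)*r 0 ^ 2*r 2 ^ 2 + (-2:ℝ)*r 0 ^ 2*r 1 ^ 2)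
        = 8*h^2*(4*(((-1:ℝ)/4))*(r 3)^2 + 2*(((1:ℝ)/2)*r 4 ^ 2 + ((-1:ℝ)/2)*r 2 ^ 2 + ((1:ℝ)/2)*r 1 ^ 2)) := by
      rw [e0, e1, e2, e3, e4, e5]
      rw [show h^2 = (pp*mm - qq^2)/(pp - 2*qq + mm) from by rw [eq_div_iff hd0]; exact hE]
      field_simp
      ring
    linear_combination (r 3) * X
  have K4 : fderiv ℝ cayleyMengerH r (Pi.single (4:Fin 6) 1)
      = 8*h^2 * (fderiv ℝ trapF r (Pi.single (4:Fin 6) 1)) := by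
    rw [fderivSingleQuartic diffH 4 ((-2:ℝ)*r 1 ^ 2) ((-2:ℝ)*r 3 ^ 2*r 5 ^ 2 + (2:ℝ)*r 2 ^ 2*r 3 ^ 2 + (2:ℝ)*r 1 ^ 2*r 5 ^ 2 + (2:ℝ)*r 1 ^ 2*r 3 ^ 2 + (2:ℝ)*r 1 ^ 2*r 2 ^ 2 + (-2:ℝ)*r 1 ^ 2*r 1 ^ 2 + (2:ℝ)*r 0 ^ 2*r 5 ^ 2 + (-2:ℝ)*r 0 ^ 2*r 2 ^ 2 + (2:ℝ)*r 0 ^ 2*r 1 ^ 2) ((2:ℝ)*r 2 ^ 2*r 3 ^ 2*r 5 ^ 2 + (-2:ℝ)*r 2 ^ 2*r 3 ^ 2*r 3 ^ 2 + (-2:ℝ)*r 2 ^ 2*r 2 ^ 2*r 3 ^ 2 + (-2:ℝ)*r 1 ^ 2*r 2 ^ 2*r 5 ^ 2 + (2:ℝ)*r 1 ^ 2*r 2 ^ 2*r 3 ^ 2 + (-2:ℝ)*r 0 ^ 2*r 5 ^ 2*r 5 ^ 2 + (2:ℝ)*r 0 ^ 2*r 3 ^ 2*r 5 ^ 2 +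 (2:ℝ)*r 0 ^ 2*r 2 ^ 2*r 5 ^ 2 + (2:ℝ)*r 0 ^ 2*r 2 ^ 2*r 3 ^ 2 + (2:ℝ)*r 0 ^ 2*r 1 ^ 2*r 5 ^ 2 + (-2:ℝ)*r 0 ^ 2*r 1 ^ 2*r 3 ^ 2 + (-2:ℝ)*r 0 ^ 2*r 0 ^ 2*r 5 ^ 2)
        (by intro τ; rw [cayleyMengerH_poly]; simp [Pi.single_apply]; ring),
      fderivSingleQuartic diffF 4 (((-1:ℝ)/4)) (((1:ℝ)/2)*r 3 ^ 2 + ((1:ℝ)/2)*r 2 ^ 2 + ((-1:ℝ)/2)*r 1 ^ 2) (((-1:ℝ)/4)*r 3 ^ 2*r 3 ^ 2 + ((-1:ℝ)/2)*r 2 ^ 2*r 3 ^ 2 + ((-1:ℝ)/4)*r 2 ^ 2*r 2 ^ 2 + ((1:ℝ)/2)*r 1 ^ 2*r 3 ^ 2 + ((1:ℝ)/2)*r 1 ^ 2*r 2 ^ 2 + ((-1:ℝ)/4)*r 1 ^ 2*r 1 ^ 2 + (1:ℝ)*r 0 ^ 2*r 5 ^ 2)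
        (by intro τ; simp only [trapF]; simp [Pi.single_apply]; ring)]
    have X : 4*((-2:ℝ)*r 1 ^ 2)*(r 4)^2 + 2*((-2:ℝ)*r 3 ^ 2*r 5 ^ 2 + (2:ℝ)*r 2 ^ 2*r 3 ^ 2 + (2:ℝ)*r 1 ^ 2*r 5 ^ 2 + (2:ℝ)*r 1 ^ 2*r 3 ^ 2 + (2:ℝ)*r 1 ^ 2*r 2 ^ 2 + (-2:ℝ)*r 1 ^ 2*r 1 ^ 2 + (2:ℝ)*r 0 ^ 2*r 5 ^ 2 + (-2:ℝ)*r 0 ^ 2*r 2 ^ 2 + (2:ℝ)*r 0 ^ 2*r 1 ^ 2)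
        = 8*h^2*(4*(((-1:ℝ)/4))*(r 4)^2 + 2*(((1:ℝ)/2)*r 3 ^ 2 + ((1:ℝ)/2)*r 2 ^ 2 + ((-1:ℝ)/2)*r 1 ^ 2)) := by
      rw [e0, e1, e2, e3, e4, e5]
      rw [show h^2 = (pp*mm - qq^2)/(pp - 2*qq + mm) from by rw [eq_div_iff hd0]; exact hE]
      field_simp
      ring
    linear_combination (r 4) * X
  have K5 : fderiv ℝ cayleyMengerH r (Pi.single (5:Fin 6) 1)
      = 8*h^2 * (fderiv ℝ trapF r (Pi.single (5:Fin 6) 1)) := by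
    rw [fderivSingleQuartic diffH 5 ((-2:ℝ)*r 0 ^ 2) ((-2:ℝ)*r 3 ^ 2*r 4 ^ 2 + (2:ℝ)*r 2 ^ 2*r 3 ^ 2 + (2:ℝ)*r 1 ^ 2*r 4 ^ 2 + (-2:ℝ)*r 1 ^ 2*r 2 ^ 2 + (2:ℝ)*r 0 ^ 2*r 4 ^ 2 + (2:ℝ)*r 0 ^ 2*r 3 ^ 2 + (2:ℝ)*r 0 ^ 2*r 2 ^ 2 + (2:ℝ)*r 0 ^ 2*r 1 ^ 2 + (-2:ℝ)*r 0 ^ 2*r 0 ^ 2) ((2:ℝ)*r 2 ^ 2*r 3 ^ 2*r 4 ^ 2 + (-2:ℝ)*r 2 ^ 2*r 3 ^ 2*r 3 ^ 2 + (-2:ℝ)*r 2 ^ 2*r 2 ^ 2*r 3 ^ 2 + (-2:ℝ)*r 1 ^ 2*r 4 ^ 2*r 4 ^ 2 + (2:ℝ)*r 1 ^ 2*r 3 ^ 2*r 4 ^ 2 + (2:ℝ)*r 1 ^ 2*r 2 ^ 2*r 4 ^ 2 + (2:ℝ)*r 1 ^ 2*r 2 ^ 2*r 3 ^ 2 + (-2:ℝ)*r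 1 ^ 2*r 1 ^ 2*r 4 ^ 2 + (-2:ℝ)*r 0 ^ 2*r 2 ^ 2*r 4 ^ 2 + (2:ℝ)*r 0 ^ 2*r 2 ^ 2*r 3 ^ 2 + (2:ℝ)*r 0 ^ 2*r 1 ^ 2*r 4 ^ 2 + (-2:ℝ)*r 0 ^ 2*r 1 ^ 2*r 3 ^ 2)
        (by intro τ; rw [cayleyMengerH_poly]; simp [Pi.single_apply]; ring),
      fderivSingleQuartic diffF 5 (0:ℝ) ((1:ℝ)*r 0 ^ 2) (((-1:ℝ)/4)*r 4 ^ 2*r 4 ^ 2 + ((1:ℝ)/2)*r 3 ^ 2*r 4 ^ 2 + ((-1:ℝ)/4)*r 3 ^ 2*r 3 ^ 2 + ((1:ℝ)/2)*r 2 ^ 2*r 4 ^ 2 + ((-1:ℝ)/2)*r 2 ^ 2*r 3 ^ 2 + ((-1:ℝ)/4)*r 2 ^ 2*r 2 ^ 2 + ((-1:ℝ)/2)*r 1 ^ 2*r 4 ^ 2 + ((1:ℝ)/2)*r 1 ^ 2*r 3 ^ 2 + ((1:ℝ)/2)*r 1 ^ 2*r 2 ^ 2 + ((-1:ℝ)/4)*r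 1 ^ 2*r 1 ^ 2)
        (by intro τ; simp only [trapF]; simp [Pi.single_apply]; ring)]
    have X : 4*((-2:ℝ)*r 0 ^ 2)*(r 5)^2 + 2*((-2:ℝ)*r 3 ^ 2*r 4 ^ 2 + (2:ℝ)*r 2 ^ 2*r 3 ^ 2 + (2:ℝ)*r 1 ^ 2*r 4 ^ 2 + (-2:ℝ)*r 1 ^ 2*r 2 ^ 2 + (2:ℝ)*r 0 ^ 2*r 4 ^ 2 + (2:ℝ)*r 0 ^ 2*r 3 ^ 2 + (2:ℝ)*r 0 ^ 2*r 2 ^ 2 + (2:ℝ)*r 0 ^ 2*r 1 ^ 2 + (-2:ℝ)*r 0 ^ 2*r 0 ^ 2)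
        = 8*h^2*(4*(0:ℝ)*(r 5)^2 + 2*((1:ℝ)*r 0 ^ 2)) := by
      rw [e0, e1, e2, e3, e4, e5]
      rw [show h^2 = (pp*mm - qq^2)/(pp - 2*qq + mm) from by rw [eq_div_iff hd0]; exact hE]
      field_simp
      ring
    linear_combination (r 5) * X
  have hi : ∀ i : Fin 6, fderiv ℝ cayleyMengerH r (Pi.single i 1)
      = 8*h^2 * (fderiv ℝ trapF r (Pi.single i 1)) := by
    intro i
    fin_cases i
    · exact K0
    · exact K1
    · exact K2
    · exact K3
    · exact K4
    · exact K5
  apply ContinuousLinearMap.coe_injective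
  apply (Pi.basisFun ℝ (Fin 6)).ext
  intro i
  simpa using hi i
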